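/- Let G be a partition of [n] into t+2 blocks, where exactly t+1 of its blocks are singletons (n ≥ t+2). Let k ≥ t+2 and let W be the set of partitions F of [n] into k blocks such that |F ∩ G| ≥ t. Then |W| = (t+1)·S(n-t, k-t) - t·S(n-t-1, k-t-1). -/

import Mathlib

open Finset

/-- Stirling number of the second kind. -/
def stirling : ℕ → ℕ → ℕ
  | 0, 0 => 1
  | 0, _ + 1 => 0
  | _ + 1, 0 => 0
  | n + 1, k + 1 => stirling n k + (k + 1) * stirling n (k + 1)

/-- `P` is a partition of `[n]` into `k` pairwise disjoint nonempty blocks. -/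
def IsKPartition (n k : ℕ) (P : Finset (Finset (Fin n))) : Prop :=
  P.card = k ∧ (∀ B ∈ P, B.Nonempty) ∧
    (∀ B ∈ P, ∀ C ∈ P, B ≠ C → Disjoint B C) ∧ P.sup id = Finset.univ

section Aux

open scoped Classical

variable {n : ℕ}

def PartOf (s : Finset (Fin n)) (k : ℕ) (P : Finset (Finset (Fin n))) : Prop :=
  P.card = k ∧ (∀ B ∈ P, B.Nonempty) ∧
    (∀ B ∈ P, ∀ C ∈ P, B ≠ C → Disjoint B C) ∧ P.sup id = s

lemma PartOf.block_subset {s : Finset (Fin n)} {k P} (h : PartOf s k P) {B} (hB : B ∈ P) :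
    B ⊆ s := by
  have := Finset.le_sup (f := id) hB
  rw [h.2.2.2] at this; exact this

lemma PartOf.exists_block {s : Finset (Fin n)} {k P} (h : PartOf s k P) {a} (ha : a ∈ s) :
    ∃ B ∈ P, a ∈ B := by
  rw [← h.2.2.2] at ha
  simpa using Finset.mem_sup.mp ha

lemma PartOf.block_eq {s : Finset (Fin n)} {k P} (h : PartOf s k P) {B C a} (hB : B ∈ P)
    (hC : C ∈ P) (haB : a ∈ B) (haC : a ∈ C) : B = C := by
  by_contra hne
  exact Finset.disjoint_left.mp (h.2.2.1 B hB C hC hne) haB haC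

lemma filter_card_congr' {α : Type*} [Fintype α] {p q : α → Prop} {h1 : DecidablePred p}
    {h2 : DecidablePred q} (h : ∀ a, p a ↔ q a) :
    (@Finset.filter α p h1 univ).card = (@Finset.filter α q h2 univ).card := by
  congr 1
  ext x
  simp only [Finset.mem_filter, mem_univ, true_and]
  exact h x

lemma count_erase_block (s : Finset (Fin n)) (k : ℕ) (B : Finset (Fin n))
    (hBs : B ⊆ s) (hBne : B.Nonempty) (Φ : Finset (Finset (Fin n)) → Prop) :
    (univ.filter fun P => PartOf s (k+1) P ∧ B ∈ P ∧ Φ (P.erase B)).card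
      = (univ.filter fun Q => PartOf (s \ B) k Q ∧ Φ Q).card := by
  apply Finset.card_bij (fun P _ => P.erase B)
  · rintro P hP
    simp only [mem_filter, mem_univ, true_and] at hP ⊢
    obtain ⟨hp, hBP, hphi⟩ := hP
    refine ⟨⟨?_, ?_, ?_, ?_⟩, hphi⟩
    · rw [Finset.card_erase_of_mem hBP, hp.1]; rfl
    · exact fun C hC => hp.2.1 C (Finset.mem_of_mem_erase hC)
    · exact fun C hC D hD hne => hp.2.2.1 C (Finset.mem_of_mem_erase hC) D
        (Finset.mem_of_mem_erase hD) hne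
    · ext x
      simp only [Finset.mem_sup, Finset.mem_erase, Finset.mem_sdiff, id]
      constructor
      · rintro ⟨C, ⟨hCB, hCP⟩, hxC⟩
        refine ⟨hp.block_subset hCP hxC, fun hxB => hCB ?_⟩
        exact hp.block_eq hCP hBP hxC hxB
      · rintro ⟨hxs, hxB⟩
        obtain ⟨C, hCP, hxC⟩ := hp.exists_block hxs
        exact ⟨C, ⟨fun h => hxB (h ▸ hxC), hCP⟩, hxC⟩
  · rintro P hP P' hP' hEq
    simp only [mem_filter, mem_univ, true_and] at hP hP'
    rw [← Finset.insert_erase hP.2.1, hEq, Finset.insert_erase hP'.2.1]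
  · rintro Q hQ
    simp only [mem_filter, mem_univ, true_and] at hQ
    obtain ⟨hq, hphi⟩ := hQ
    have hBQ : B ∉ Q := by
      intro hBQ
      obtain ⟨b, hb⟩ := hBne
      exact (Finset.mem_sdiff.mp (hq.block_subset hBQ hb)).2 hb
    refine ⟨insert B Q, ?_, by rw [Finset.erase_insert hBQ]⟩
    simp only [mem_filter, mem_univ, true_and]
    have herase : (insert B Q).erase B = Q := Finset.erase_insert hBQ
    refine ⟨⟨?_, ?_, ?_, ?_⟩, Finset.mem_insert_self _ _, by rw [herase]; exact hphi⟩
    · rw [Finset.card_insert_of_notMem hBQ, hq.1]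
    · rintro C hC
      rcases Finset.mem_insert.mp hC with rfl | hC
      · exact hBne
      · exact hq.2.1 C hC
    · have hdisjB : ∀ C ∈ Q, Disjoint B C := fun C hC =>
        Finset.disjoint_right.mpr fun x hxC =>
          (Finset.mem_sdiff.mp (hq.block_subset hC hxC)).2
      rintro C hC D hD hne
      rcases Finset.mem_insert.mp hC with h1 | hC
      · rcases Finset.mem_insert.mp hD with h2 | hD
        · exact absurd (h1.trans h2.symm) hne
        · exact h1 ▸ hdisjB D hD
      · rcases Finset.mem_insert.mp hD with h2 | hD
        · exact h2 ▸ (hdisjB C hC).symm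
        · exact hq.2.2.1 C hC D hD hne
    · rw [Finset.sup_insert, hq.2.2.2, id]
      rw [Finset.sup_eq_union, Finset.union_sdiff_of_subset hBs]

lemma count_no_singleton (s : Finset (Fin n)) (j : ℕ) {a : Fin n} (ha : a ∈ s) :
    (univ.filter fun P => PartOf s (j+1) P ∧ ({a} : Finset (Fin n)) ∉ P).card
      = (j+1) * (univ.filter fun Q => PartOf (s.erase a) (j+1) Q).card := by
  set T := univ.filter fun Q : Finset (Finset (Fin n)) => PartOf (s.erase a) (j+1) Q with hT
  have hnotina : ∀ {Q : Finset (Finset (Fin n))} {B : Finset (Fin n)},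
      PartOf (s.erase a) (j+1) Q → B ∈ Q → a ∉ B := by
    intro Q B hq hB h
    exact (Finset.mem_erase.mp (hq.block_subset hB h)).1 rfl
  -- the map g
  set g : Finset (Finset (Fin n)) → Finset (Fin n) → Finset (Finset (Fin n)) :=
    fun Q C => insert (insert a C) (Q.erase C) with hg
  have hgood : ∀ Q ∈ T, ∀ C ∈ Q, PartOf s (j+1) (g Q C) ∧ ({a} : Finset (Fin n)) ∉ g Q C := by
    intro Q hQ C hC
    rw [hT, mem_filter] at hQ
    have hq := hQ.2
    have haC : a ∉ C := hnotina hq hC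
    have hCne : C.Nonempty := hq.2.1 C hC
    have hnotmem : insert a C ∉ Q.erase C := by
      intro h
      exact hnotina hq (Finset.mem_of_mem_erase h) (Finset.mem_insert_self a C)
    constructor
    · refine ⟨?_, ?_, ?_, ?_⟩
      · rw [hg]; dsimp only
        rw [Finset.card_insert_of_notMem hnotmem, Finset.card_erase_of_mem hC, hq.1]; omega
      · intro B hB
        rcases Finset.mem_insert.mp hB with h1 | hB
        · exact h1 ▸ Finset.insert_nonempty a C
        · exact hq.2.1 B (Finset.mem_of_mem_erase hB)
      · have hdisj : ∀ D ∈ Q.erase C, Disjoint (insert a C) D := by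
          intro D hD
          have hDQ := Finset.mem_of_mem_erase hD
          have hDC : D ≠ C := (Finset.mem_erase.mp hD).1
          refine Finset.disjoint_left.mpr fun x hx hxD => ?_
          rcases Finset.mem_insert.mp hx with rfl | hx
          · exact hnotina hq hDQ hxD
          · exact Finset.disjoint_left.mp (hq.2.2.1 C hC D hDQ (Ne.symm hDC)) hx hxD
        intro B hB D hD hne
        rcases Finset.mem_insert.mp hB with h1 | hB
        · rcases Finset.mem_insert.mp hD with h2 | hD
          · exact absurd (h1.trans h2.symm) hne
          · exact h1 ▸ hdisj D hD
        · rcases Finset.mem_insert.mp hD with h2 | hD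
          · exact h2 ▸ (hdisj B hB).symm
          · exact hq.2.2.1 B (Finset.mem_of_mem_erase hB) D (Finset.mem_of_mem_erase hD) hne
      · ext x
        simp only [hg, Finset.sup_insert, Finset.mem_union, Finset.mem_sup, id,
          Finset.sup_eq_union, Finset.mem_insert]
        constructor
        · rintro (⟨h1 | h1⟩ | ⟨D, hD, hxD⟩)
          · exact h1 ▸ ha
          · exact Finset.mem_of_mem_erase (hq.block_subset hC h1)
          · exact Finset.mem_of_mem_erase (hq.block_subset (Finset.mem_of_mem_erase hD) hxD)
        · intro hxs
          by_cases hxa : x = a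
          · exact Or.inl (Or.inl hxa)
          · obtain ⟨D, hD, hxD⟩ := hq.exists_block (Finset.mem_erase.mpr ⟨hxa, hxs⟩)
            by_cases hDC : D = C
            · exact Or.inl (Or.inr (hDC ▸ hxD))
            · exact Or.inr ⟨D, Finset.mem_erase.mpr ⟨hDC, hD⟩, hxD⟩
    · intro hmem
      rcases Finset.mem_insert.mp hmem with h1 | h1
      · obtain ⟨c, hc⟩ := hCne
        have : c ∈ ({a} : Finset (Fin n)) := h1 ▸ Finset.mem_insert_of_mem hc
        rw [Finset.mem_singleton] at this
        exact haC (this ▸ hc)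
      · exact hnotina hq (Finset.mem_of_mem_erase h1) (Finset.mem_singleton_self a)
  have hrg : ∀ Q ∈ T, ∀ C ∈ Q, (g Q C).image (fun B => B.erase a) = Q := by
    intro Q hQ C hC
    rw [hT, mem_filter] at hQ
    have hq := hQ.2
    have haC : a ∉ C := hnotina hq hC
    rw [hg]; dsimp only
    rw [Finset.image_insert, Finset.erase_insert haC]
    have : (Q.erase C).image (fun B => B.erase a) = Q.erase C := by
      rw [Finset.image_congr (g := id) ?_, Finset.image_id]
      intro B hB
      exact Finset.erase_eq_of_notMem (hnotina hq (Finset.mem_of_mem_erase hB))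
    rw [this, Finset.insert_erase hC]
  have hmain : (univ.filter fun P => PartOf s (j+1) P ∧ ({a} : Finset (Fin n)) ∉ P)
      = T.biUnion (fun Q => Q.image (g Q)) := by
    ext P
    simp only [mem_filter, mem_univ, true_and, Finset.mem_biUnion, Finset.mem_image]
    constructor
    · rintro ⟨hp, hno⟩
      obtain ⟨B₀, hB₀, haB₀⟩ := hp.exists_block ha
      set C := B₀.erase a with hC
      have hCne : C.Nonempty := by
        rcases Finset.eq_empty_or_nonempty C with h | h
        · rw [hC] at h
          rcases (Finset.erase_eq_empty_iff _ _).mp h with h1 | h1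
          · exact absurd (h1 ▸ haB₀) (Finset.notMem_empty a)
          · exact absurd (h1 ▸ hB₀) hno
        · exact h
      have haC : a ∉ C := Finset.notMem_erase a B₀
      have hCP : C ∉ P.erase B₀ := by
        intro h
        obtain ⟨c, hc⟩ := hCne
        have hDQ := Finset.mem_of_mem_erase h
        have hDC : C ≠ B₀ := (Finset.mem_erase.mp h).1
        exact Finset.disjoint_left.mp (hp.2.2.1 C hDQ B₀ hB₀ hDC) hc (Finset.mem_of_mem_erase hc)
      refine ⟨insert C (P.erase B₀), ?_, C, Finset.mem_insert_self _ _, ?_⟩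
      · rw [hT, mem_filter]
        refine ⟨mem_univ _, ?_, ?_, ?_, ?_⟩
        · rw [Finset.card_insert_of_notMem hCP, Finset.card_erase_of_mem hB₀, hp.1]; omega
        · intro B hB
          rcases Finset.mem_insert.mp hB with h1 | hB
          · exact h1 ▸ hCne
          · exact hp.2.1 B (Finset.mem_of_mem_erase hB)
        · have hdisj : ∀ D ∈ P.erase B₀, Disjoint C D := by
            intro D hD
            have hDQ := Finset.mem_of_mem_erase hD
            have hDB : D ≠ B₀ := (Finset.mem_erase.mp hD).1
            exact Finset.disjoint_of_subset_left (Finset.erase_subset a B₀)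
              (hp.2.2.1 B₀ hB₀ D hDQ (Ne.symm hDB))
          intro B hB D hD hne
          rcases Finset.mem_insert.mp hB with h1 | hB
          · rcases Finset.mem_insert.mp hD with h2 | hD
            · exact absurd (h1.trans h2.symm) hne
            · exact h1 ▸ hdisj D hD
          · rcases Finset.mem_insert.mp hD with h2 | hD
            · exact h2 ▸ (hdisj B hB).symm
            · exact hp.2.2.1 B (Finset.mem_of_mem_erase hB) D (Finset.mem_of_mem_erase hD) hne
        · ext x
          simp only [Finset.sup_insert, Finset.mem_union, Finset.mem_sup, id,
            Finset.sup_eq_union]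
          constructor
          · rintro (h1 | ⟨D, hD, hxD⟩)
            · have h1' : x ∈ B₀.erase a := hC ▸ h1
              rw [Finset.mem_erase] at h1'
              exact Finset.mem_erase.mpr ⟨h1'.1, hp.block_subset hB₀ h1'.2⟩
            · have hDQ := Finset.mem_of_mem_erase hD
              have hDB : D ≠ B₀ := (Finset.mem_erase.mp hD).1
              refine Finset.mem_erase.mpr ⟨?_, hp.block_subset hDQ hxD⟩
              rintro rfl
              exact hDB (hp.block_eq hDQ hB₀ hxD haB₀)
          · intro hx
            obtain ⟨hxa, hxs⟩ := Finset.mem_erase.mp hx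
            obtain ⟨D, hD, hxD⟩ := hp.exists_block hxs
            by_cases hDB : D = B₀
            · refine Or.inl ?_
              show x ∈ C
              rw [hC]
              exact Finset.mem_erase.mpr ⟨hxa, hDB ▸ hxD⟩
            · exact Or.inr ⟨D, Finset.mem_erase.mpr ⟨hDB, hD⟩, hxD⟩
      · rw [hg]; dsimp only
        rw [Finset.erase_insert hCP, hC, Finset.insert_erase haB₀, Finset.insert_erase hB₀]
    · rintro ⟨Q, hQ, C, hC, rfl⟩
      exact hgood Q hQ C hC
  rw [hmain, Finset.card_biUnion, mul_comm]
  · have : ∀ Q ∈ T, (Q.image (g Q)).card = j + 1 := by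
      intro Q hQ
      have hq := (mem_filter.mp hQ).2
      rw [Finset.card_image_of_injOn, hq.1]
      intro C hC C' hC' hEq
      have haC : a ∉ C := hnotina hq hC
      have haC' : a ∉ C' := hnotina hq hC'
      have h1 : insert a C ∈ g Q C' := hEq ▸ Finset.mem_insert_self _ _
      rcases Finset.mem_insert.mp h1 with h2 | h2
      · rw [← Finset.erase_insert haC, ← Finset.erase_insert haC', h2]
      · exact absurd (Finset.mem_insert_self a C)
          (hnotina hq (Finset.mem_of_mem_erase h2))
    rw [Finset.sum_congr rfl this, Finset.sum_const, smul_eq_mul]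
  · intro Q hQ Q' hQ' hne
    simp only [Finset.disjoint_left, Finset.mem_image]
    rintro P ⟨C, hC, rfl⟩ ⟨C', hC', hEq⟩
    exact hne (by rw [← hrg Q hQ C hC, ← hEq, hrg Q' hQ' C' hC'])

lemma count_partOf : ∀ (s : Finset (Fin n)) (k : ℕ),
    (univ.filter fun P => PartOf s k P).card = stirling s.card k := by
  intro s
  induction s using Finset.strongInductionOn with
  | _ s IH =>
  intro k
  rcases s.eq_empty_or_nonempty with rfl | hs
  · rcases k with _ | j
    · have : (univ.filter fun P : Finset (Finset (Fin n)) => PartOf ∅ 0 P) = {∅} := by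
        ext P
        simp only [mem_filter, mem_univ, true_and, mem_singleton]
        unfold PartOf
        constructor
        · rintro ⟨h0, _, _, _⟩
          exact Finset.card_eq_zero.mp h0
        · rintro rfl
          refine ⟨rfl, by simp, by simp, by simp⟩
      rw [this]
      simp [stirling]
    · have : (univ.filter fun P : Finset (Finset (Fin n)) => PartOf ∅ (j+1) P) = ∅ := by
        ext P
        simp only [mem_filter, mem_univ, true_and, Finset.notMem_empty, iff_false]
        rintro ⟨hcard, hne, _, hsup⟩
        obtain ⟨B, hB⟩ := Finset.card_pos.mp (by omega : 0 < P.card)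
        obtain ⟨b, hb⟩ := hne B hB
        have : b ∈ P.sup id := Finset.mem_sup.mpr ⟨B, hB, hb⟩
        rw [hsup] at this
        simpa using this
      rw [this]
      simp [stirling]
  · obtain ⟨a, ha⟩ := hs
    obtain ⟨m, hm⟩ : ∃ m, s.card = m + 1 :=
      ⟨s.card - 1, by have := Finset.card_pos.mpr ⟨a, ha⟩; omega⟩
    rcases k with _ | j
    · have : (univ.filter fun P : Finset (Finset (Fin n)) => PartOf s 0 P) = ∅ := by
        ext P
        simp only [mem_filter, mem_univ, true_and, Finset.notMem_empty, iff_false]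
        intro hp
        obtain ⟨B, hB, _⟩ := hp.exists_block ha
        rw [Finset.card_eq_zero.mp hp.1] at hB
        exact Finset.notMem_empty B hB
      rw [this, hm]
      simp [stirling]
    · have hsplit : (univ.filter fun P : Finset (Finset (Fin n)) => PartOf s (j+1) P).card
          = (univ.filter fun P => PartOf s (j+1) P ∧ ({a} : Finset (Fin n)) ∈ P).card
            + (univ.filter fun P => PartOf s (j+1) P ∧ ({a} : Finset (Fin n)) ∉ P).card := by
        rw [← Finset.filter_filter, ← Finset.filter_filter,
          Finset.card_filter_add_card_filter_not]
      have h1 : (univ.filter fun P => PartOf s (j+1) P ∧ ({a} : Finset (Fin n)) ∈ P).card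
          = (univ.filter fun Q => PartOf (s.erase a) j Q).card := by
        have := count_erase_block s j {a} (by simpa using ha)
          ⟨a, Finset.mem_singleton_self a⟩ (fun _ => True)
        simpa [← Finset.erase_eq] using this
      have hIH1 := IH (s.erase a) (Finset.erase_ssubset ha) j
      have hIH2 := IH (s.erase a) (Finset.erase_ssubset ha) (j+1)
      have hcard : (s.erase a).card = m := by
        rw [Finset.card_erase_of_mem ha, hm]; omega
      rw [hsplit, h1, count_no_singleton s j ha, hIH1, hIH2, hcard, hm]
      simp [stirling]

lemma count_sing : ∀ (A : Finset (Fin n)), ∀ (s : Finset (Fin n)) (k : ℕ), A ⊆ s → A.card ≤ k →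
    (univ.filter fun P => PartOf s k P ∧ ∀ x ∈ A, ({x} : Finset (Fin n)) ∈ P).card
      = stirling (s.card - A.card) (k - A.card) := by
  intro A
  induction A using Finset.induction_on with
  | empty =>
    intro s k _ _
    simp only [Finset.notMem_empty, false_implies, implies_true, and_true,
      Finset.card_empty, Nat.sub_zero]
    exact count_partOf s k
  | insert _ _ ha =>
    rename_i a A IH2
    intro s k hsub hk
    have haA : a ∉ A := ha
    have hcardA : (insert a A).card = A.card + 1 := Finset.card_insert_of_notMem haA
    obtain ⟨j, rfl⟩ : ∃ j, k = j + 1 := ⟨k - 1, by omega⟩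
    have has : a ∈ s := hsub (Finset.mem_insert_self a A)
    have hcongr : (univ.filter fun P =>
          PartOf s (j+1) P ∧ ∀ x ∈ insert a A, ({x} : Finset (Fin n)) ∈ P)
        = (univ.filter fun P => PartOf s (j+1) P ∧ ({a} : Finset (Fin n)) ∈ P ∧
            ∀ x ∈ A, ({x} : Finset (Fin n)) ∈ P.erase {a}) := by
      apply Finset.filter_congr
      intro P _
      constructor
      · rintro ⟨hp, hall⟩
        refine ⟨hp, hall a (Finset.mem_insert_self a A), fun x hx => ?_⟩
        refine Finset.mem_erase.mpr ⟨?_, hall x (Finset.mem_insert_of_mem hx)⟩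
        intro h
        exact haA ((Finset.singleton_injective h) ▸ hx)
      · rintro ⟨hp, haP, hall⟩
        refine ⟨hp, fun x hx => ?_⟩
        rcases Finset.mem_insert.mp hx with rfl | hx
        · exact haP
        · exact Finset.mem_of_mem_erase (hall x hx)
    have hkey := count_erase_block s j {a} (by simpa using has)
      ⟨a, Finset.mem_singleton_self a⟩ (fun Q => ∀ x ∈ A, ({x} : Finset (Fin n)) ∈ Q)
    beta_reduce at hkey
    rw [hcongr]
    have hAsub : A ⊆ s \ {a} := by
      intro x hx
      refine Finset.mem_sdiff.mpr ⟨hsub (Finset.mem_insert_of_mem hx), ?_⟩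
      simp only [Finset.mem_singleton]
      rintro rfl
      exact haA hx
    have hfin := IH2 (s \ {a}) j hAsub (by omega)
    have h1 : 1 ≤ s.card := Finset.card_pos.mpr ⟨a, has⟩
    refine ((filter_card_congr' fun P => Iff.rfl).trans hkey).trans
      (((filter_card_congr' fun Q => Iff.rfl).trans hfin).trans ?_)
    rw [← Finset.erase_eq, Finset.card_erase_of_mem has, hcardA]
    congr 1 <;> omega

lemma inter_card_ge_iff {α : Type*} [DecidableEq α] {Sg F : Finset α} {t : ℕ}
    (h : Sg.card = t + 1) :
    t ≤ (F ∩ Sg).card ↔ (Sg ⊆ F ∨ ∃ b ∈ Sg, F ∩ Sg = Sg.erase b) := by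
  constructor
  · intro hge
    by_cases hc : Sg ⊆ F
    · exact Or.inl hc
    · right
      have hsub : F ∩ Sg ⊆ Sg := Finset.inter_subset_right
      have hne : F ∩ Sg ≠ Sg := by
        intro he
        exact hc (by rw [← he]; exact Finset.inter_subset_left)
      have hlt : (F ∩ Sg).card < Sg.card :=
        Finset.card_lt_card (Finset.ssubset_iff_subset_ne.mpr ⟨hsub, hne⟩)
      have h2 : (Sg \ (F ∩ Sg)).card = 1 := by
        rw [Finset.card_sdiff_of_subset hsub]
        omega
      obtain ⟨b, hb⟩ := Finset.card_eq_one.mp h2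
      have hbSg : b ∈ Sg := (Finset.mem_sdiff.mp (hb ▸ Finset.mem_singleton_self b)).1
      refine ⟨b, hbSg, ?_⟩
      calc F ∩ Sg = Sg ∩ (F ∩ Sg) := (Finset.inter_eq_right.mpr hsub).symm
        _ = Sg \ (Sg \ (F ∩ Sg)) := by rw [sdiff_sdiff_right_self, Finset.inf_eq_inter]
        _ = Sg \ {b} := by rw [hb]
        _ = Sg.erase b := by rw [Finset.erase_eq]
  · rintro (hc | ⟨b, hbSg, heq⟩)
    · rw [Finset.inter_eq_right.mpr hc]
      omega
    · rw [heq, Finset.card_erase_of_mem hbSg]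
      omega

lemma inter_eq_erase_iff {α : Type*} [DecidableEq α] {Sg F : Finset α} {b : α}
    (hbSg : b ∈ Sg) :
    F ∩ Sg = Sg.erase b ↔ (Sg.erase b ⊆ F ∧ ¬ Sg ⊆ F) := by
  constructor
  · intro heq
    constructor
    · intro x hx
      have : x ∈ F ∩ Sg := heq ▸ hx
      exact (Finset.mem_inter.mp this).1
    · intro hc
      have : b ∈ F ∩ Sg := Finset.mem_inter.mpr ⟨hc hbSg, hbSg⟩
      rw [heq] at this
      exact Finset.notMem_erase b Sg this
  · rintro ⟨hsub, hnot⟩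
    apply Finset.Subset.antisymm
    · intro x hx
      obtain ⟨hxF, hxSg⟩ := Finset.mem_inter.mp hx
      refine Finset.mem_erase.mpr ⟨?_, hxSg⟩
      rintro rfl
      exact hnot (by
        rw [← Finset.insert_erase hbSg]
        exact Finset.insert_subset hxF fun y hy => (hsub hy))
    · intro x hx
      exact Finset.mem_inter.mpr ⟨hsub hx, Finset.mem_of_mem_erase hx⟩

lemma mem_W_iff {k t : ℕ} (hkt : t + 2 ≤ k) (G : Finset (Finset (Fin n)))
    (hG : PartOf univ (t + 2) G)
    (hSgcard : (G.filter fun B => B.card = 1).card = t + 1)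
    (F : Finset (Finset (Fin n))) (hF : PartOf univ k F) :
    t ≤ (F ∩ G).card ↔ t ≤ (F ∩ G.filter fun B => B.card = 1).card := by
  set Sg := G.filter fun B => B.card = 1 with hSg
  have hSgG : Sg ⊆ G := Finset.filter_subset _ _
  have hcard1 : (G \ Sg).card = 1 := by
    rw [Finset.card_sdiff_of_subset hSgG, hG.1, hSgcard]
    omega
  obtain ⟨B₀, hB₀⟩ := Finset.card_eq_one.mp hcard1
  have hB₀mem : B₀ ∈ G \ Sg := hB₀ ▸ Finset.mem_singleton_self B₀
  have hB₀G : B₀ ∈ G := (Finset.mem_sdiff.mp hB₀mem).1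
  have hB₀Sg : B₀ ∉ Sg := (Finset.mem_sdiff.mp hB₀mem).2
  have hunion : {B₀} ∪ Sg = G := by rw [← hB₀]; exact Finset.sdiff_union_of_subset hSgG
  have hFG : F ∩ G = (F ∩ {B₀}) ∪ (F ∩ Sg) := by
    rw [← hunion, Finset.inter_union_distrib_left]
  constructor
  · intro hge
    by_cases hB₀F : B₀ ∈ F
    · have hins : F ∩ G = insert B₀ (F ∩ Sg) := by
        rw [hFG, Finset.inter_singleton_of_mem hB₀F, ← Finset.insert_eq]
      have hB₀FSg : B₀ ∉ F ∩ Sg := fun h => hB₀Sg (Finset.mem_inter.mp h).2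
      have hcardins : (F ∩ G).card = (F ∩ Sg).card + 1 := by
        rw [hins, Finset.card_insert_of_notMem hB₀FSg]
      by_contra hlt
      push_neg at hlt
      -- so (F ∩ Sg).card = t - 1 with t ≥ 1
      have hcc : (F ∩ Sg).card + 1 = t := by omega
      have hD2 : (Sg \ F).card = 2 := by
        have h3 := Finset.card_sdiff_add_card_inter Sg F
        rw [Finset.inter_comm Sg F] at h3
        omega
      obtain ⟨b1, b2, hb12, hDeq⟩ := Finset.card_eq_two.mp hD2
      have hb1D : b1 ∈ Sg \ F := hDeq ▸ Finset.mem_insert_self _ _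
      have hb2D : b2 ∈ Sg \ F := hDeq ▸ Finset.mem_insert_of_mem (Finset.mem_singleton_self b2)
      obtain ⟨x, hx⟩ := Finset.card_eq_one.mp
        (Finset.mem_filter.mp (Finset.mem_sdiff.mp hb1D).1).2
      obtain ⟨y, hy⟩ := Finset.card_eq_one.mp
        (Finset.mem_filter.mp (Finset.mem_sdiff.mp hb2D).1).2
      have hxF : ({x} : Finset (Fin n)) ∉ F := hx ▸ (Finset.mem_sdiff.mp hb1D).2
      have hyF : ({y} : Finset (Fin n)) ∉ F := hy ▸ (Finset.mem_sdiff.mp hb2D).2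
      have hxy : x ≠ y := by
        rintro rfl
        exact hb12 (hx.trans hy.symm)
      have hFGcard : (F \ G).card + (F ∩ G).card = F.card :=
        Finset.card_sdiff_add_card_inter F G
      have h2le : 1 < (F \ G).card := by
        rw [hF.1] at hFGcard
        omega
      obtain ⟨E1, hE1, E2, hE2, hE12⟩ := Finset.one_lt_card.mp h2le
      have hsubxy : ∀ E ∈ F \ G, E ⊆ ({x, y} : Finset (Fin n)) := by
        intro E hE e he
        have hEF : E ∈ F := (Finset.mem_sdiff.mp hE).1
        have hEG : E ∉ G := (Finset.mem_sdiff.mp hE).2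
        obtain ⟨C, hCG, heC⟩ := hG.exists_block (Finset.mem_univ e)
        by_cases hCB : C = B₀
        · exact absurd (hF.block_eq hEF hB₀F he (hCB ▸ heC)) fun h => hEG (h ▸ hB₀G)
        · have hCSg : C ∈ Sg := by
            have := hunion ▸ hCG
            rcases Finset.mem_union.mp this with h1 | h1
            · exact absurd (Finset.mem_singleton.mp h1) hCB
            · exact h1
          obtain ⟨z, hz⟩ := Finset.card_eq_one.mp (Finset.mem_filter.mp hCSg).2
          have hez : e = z := by
            rw [hz] at heC
            exact Finset.mem_singleton.mp heC
          have heSg : ({e} : Finset (Fin n)) ∈ Sg := by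
            rw [hez, ← hz]
            exact hCSg
          by_cases heF : ({e} : Finset (Fin n)) ∈ F
          · have hEe : E = {e} := hF.block_eq hEF heF he (Finset.mem_singleton_self e)
            exact absurd (hEe ▸ hSgG heSg) hEG
          · have heD : ({e} : Finset (Fin n)) ∈ Sg \ F :=
              Finset.mem_sdiff.mpr ⟨heSg, heF⟩
            rw [hDeq] at heD
            rcases Finset.mem_insert.mp heD with h1 | h1
            · have he' : e = x := Finset.singleton_injective (h1.trans hx)
              simp [he']
            · have he' : e = y :=
                Finset.singleton_injective ((Finset.mem_singleton.mp h1).trans hy)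
              simp [he']
      have hE1sub := hsubxy E1 hE1
      have hE2sub := hsubxy E2 hE2
      have hE1F : E1 ∈ F := (Finset.mem_sdiff.mp hE1).1
      have hE2F : E2 ∈ F := (Finset.mem_sdiff.mp hE2).1
      have hE1ne : E1.Nonempty := hF.2.1 E1 hE1F
      have hE2ne : E2.Nonempty := hF.2.1 E2 hE2F
      have hdisj : Disjoint E1 E2 := hF.2.2.1 E1 hE1F E2 hE2F hE12
      have hmem_xy : ∀ e ∈ ({x, y} : Finset (Fin n)), e = x ∨ e = y := by
        intro e he
        rcases Finset.mem_insert.mp he with h | h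
        · exact Or.inl h
        · exact Or.inr (Finset.mem_singleton.mp h)
      by_cases hx1 : x ∈ E1
      · by_cases hy1 : y ∈ E1
        · obtain ⟨e2, he2⟩ := hE2ne
          rcases hmem_xy e2 (hE2sub he2) with rfl | rfl
          · exact Finset.disjoint_left.mp hdisj hx1 he2
          · exact Finset.disjoint_left.mp hdisj hy1 he2
        · have hsub1 : E1 ⊆ {x} := by
            intro e he
            rcases hmem_xy e (hE1sub he) with rfl | rfl
            · exact Finset.mem_singleton_self e
            · exact absurd he hy1
          have : E1 = {x} := by
            rcases Finset.subset_singleton_iff.mp hsub1 with h | h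
            · exact absurd h (Finset.nonempty_iff_ne_empty.mp hE1ne)
            · exact h
          exact hxF (this ▸ hE1F)
      · by_cases hy1 : y ∈ E1
        · have hsub1 : E1 ⊆ {y} := by
            intro e he
            rcases hmem_xy e (hE1sub he) with rfl | rfl
            · exact absurd he hx1
            · exact Finset.mem_singleton_self e
          have : E1 = {y} := by
            rcases Finset.subset_singleton_iff.mp hsub1 with h | h
            · exact absurd h (Finset.nonempty_iff_ne_empty.mp hE1ne)
            · exact h
          exact hyF (this ▸ hE1F)
        · obtain ⟨e1, he1⟩ := hE1ne
          rcases hmem_xy e1 (hE1sub he1) with rfl | rfl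
          · exact hx1 he1
          · exact hy1 he1
    · have : F ∩ {B₀} = ∅ := Finset.inter_singleton_of_notMem hB₀F
      rw [hFG, this, Finset.empty_union] at hge
      exact hge
  · intro hge
    exact le_trans hge (Finset.card_le_card
      (Finset.inter_subset_inter (Finset.Subset.refl F) hSgG))

end Aux


theorem stmt_16 (n k t : ℕ) (hn : t + 2 ≤ n) (hkt : t + 2 ≤ k)
    (G : Finset (Finset (Fin n))) (hG : IsKPartition n (t + 2) G)
    (hGsing : (G.filter fun B => B.card = 1).card = t + 1) :
    ({F : Finset (Finset (Fin n)) | IsKPartition n k F ∧ t ≤ (F ∩ G).card}.ncard : ℤ) =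
      (t + 1) * stirling (n - t) (k - t) - t * stirling (n - t - 1) (k - t - 1) := by
  classical
  have hG' : PartOf Finset.univ (t + 2) G := hG
  set Sg := G.filter fun B => B.card = 1 with hSgdef
  have hSgG : Sg ⊆ G := Finset.filter_subset _ _
  set A := Finset.univ.filter (fun x : Fin n => ({x} : Finset (Fin n)) ∈ Sg) with hAdef
  have hSgA : Sg = A.image (fun x => ({x} : Finset (Fin n))) := by
    ext B
    simp only [hAdef, Finset.mem_image, Finset.mem_filter, Finset.mem_univ, true_and]
    constructor
    · intro hB
      obtain ⟨x, hx⟩ := Finset.card_eq_one.mp (Finset.mem_filter.mp hB).2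
      exact ⟨x, hx ▸ hB, hx.symm⟩
    · rintro ⟨x, hxSg, rfl⟩
      exact hxSg
  have hAcard : A.card = t + 1 := by
    have h1 : Sg.card = A.card := by
      rw [hSgA]
      exact Finset.card_image_of_injective _ Finset.singleton_injective
    omega
  have hsetW : {F : Finset (Finset (Fin n)) | IsKPartition n k F ∧ t ≤ (F ∩ G).card}
      = ↑(Finset.univ.filter fun F => PartOf Finset.univ k F ∧
          (Sg ⊆ F ∨ ∃ b ∈ Sg, F ∩ Sg = Sg.erase b)) := by
    ext F
    simp only [Set.mem_setOf_eq, Finset.coe_filter, Finset.mem_univ, true_and]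
    constructor
    · rintro ⟨hF, hge⟩
      have hF' : PartOf Finset.univ k F := hF
      exact ⟨hF', (inter_card_ge_iff hGsing).mp
        ((mem_W_iff hkt G hG' hGsing F hF').mp hge)⟩
    · rintro ⟨hF', hd⟩
      exact ⟨hF', (mem_W_iff hkt G hG' hGsing F hF').mpr
        ((inter_card_ge_iff hGsing).mpr hd)⟩
  have hU : (Finset.univ.filter fun F => PartOf Finset.univ k F ∧
        (Sg ⊆ F ∨ ∃ b ∈ Sg, F ∩ Sg = Sg.erase b))
      = (Finset.univ.filter fun F => PartOf Finset.univ k F ∧ Sg ⊆ F)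
        ∪ (Finset.univ.filter fun F => PartOf Finset.univ k F ∧
            ∃ b ∈ Sg, F ∩ Sg = Sg.erase b) := by
    ext F
    simp only [Finset.mem_union, Finset.mem_filter, Finset.mem_univ, true_and]
    tauto
  have hdj : Disjoint
      (Finset.univ.filter fun F => PartOf Finset.univ k F ∧ Sg ⊆ F)
      (Finset.univ.filter fun F => PartOf Finset.univ k F ∧
        ∃ b ∈ Sg, F ∩ Sg = Sg.erase b) := by
    rw [Finset.disjoint_left]
    intro F h1 h2
    simp only [Finset.mem_filter, Finset.mem_univ, true_and] at h1 h2
    obtain ⟨b, hb, heq⟩ := h2.2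
    exact ((inter_eq_erase_iff hb).mp heq).2 h1.2
  have N1 : (Finset.univ.filter fun F => PartOf Finset.univ k F ∧ Sg ⊆ F).card
      = stirling (n - (t + 1)) (k - (t + 1)) := by
    refine (filter_card_congr' fun F => and_congr_right fun _ => ?_).trans
      ((count_sing A Finset.univ k (Finset.subset_univ A) (by omega)).trans ?_)
    · rw [hSgA, Finset.image_subset_iff]
    · rw [Finset.card_univ, Fintype.card_fin, hAcard]
  have hper : ∀ b ∈ Sg,
      (Finset.univ.filter fun F => PartOf Finset.univ k F ∧ F ∩ Sg = Sg.erase b).card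
        + (Finset.univ.filter fun F => PartOf Finset.univ k F ∧ Sg ⊆ F).card
      = stirling (n - t) (k - t) := by
    intro b hb
    obtain ⟨x₀, hx₀A, hbx⟩ := Finset.mem_image.mp (hSgA ▸ hb)
    have hX : (Finset.univ.filter fun F => PartOf Finset.univ k F ∧ F ∩ Sg = Sg.erase b).card
        + (Finset.univ.filter fun F => PartOf Finset.univ k F ∧ Sg ⊆ F).card
        = (Finset.univ.filter fun F => PartOf Finset.univ k F ∧ Sg.erase b ⊆ F).card := by
      rw [← Finset.card_union_of_disjoint ?hdj2]
      case hdj2 =>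
        rw [Finset.disjoint_left]
        intro F hF1 hF2
        simp only [Finset.mem_filter, Finset.mem_univ, true_and] at hF1 hF2
        exact ((inter_eq_erase_iff hb).mp hF1.2).2 hF2.2
      congr 1
      ext F
      simp only [Finset.mem_union, Finset.mem_filter, Finset.mem_univ, true_and]
      constructor
      · rintro (⟨h1, h2⟩ | ⟨h1, h2⟩)
        · exact ⟨h1, ((inter_eq_erase_iff hb).mp h2).1⟩
        · exact ⟨h1, (Finset.erase_subset b Sg).trans h2⟩
      · rintro ⟨h1, h2⟩
        by_cases h3 : Sg ⊆ F
        · exact Or.inr ⟨h1, h3⟩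
        · exact Or.inl ⟨h1, (inter_eq_erase_iff hb).mpr ⟨h2, h3⟩⟩
    have hN : (Finset.univ.filter fun F =>
          PartOf Finset.univ k F ∧ Sg.erase b ⊆ F).card
        = stirling (n - t) (k - t) := by
      have hsub : Sg.erase b = (A.erase x₀).image (fun x => ({x} : Finset (Fin n))) := by
        rw [hSgA, ← hbx]
        exact (Finset.image_erase Finset.singleton_injective A x₀).symm
      refine (filter_card_congr' fun F => and_congr_right fun _ => ?_).trans
        ((count_sing (A.erase x₀) Finset.univ k (Finset.subset_univ _) (by
          rw [Finset.card_erase_of_mem hx₀A]; omega)).trans ?_)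
      · rw [hsub, Finset.image_subset_iff]
      · rw [Finset.card_univ, Fintype.card_fin, Finset.card_erase_of_mem hx₀A, hAcard]
        congr 1 <;> omega
    omega
  have hbiU : (Finset.univ.filter fun F => PartOf Finset.univ k F ∧
        ∃ b ∈ Sg, F ∩ Sg = Sg.erase b)
      = Sg.biUnion (fun b => Finset.univ.filter fun F =>
          PartOf Finset.univ k F ∧ F ∩ Sg = Sg.erase b) := by
    ext F
    simp only [Finset.mem_biUnion, Finset.mem_filter, Finset.mem_univ, true_and]
    constructor
    · rintro ⟨h1, b, hb, h2⟩
      exact ⟨b, hb, h1, h2⟩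
    · rintro ⟨b, hb, h1, h2⟩
      exact ⟨h1, b, hb, h2⟩
  have hdisjU : ∀ b ∈ Sg, ∀ b' ∈ Sg, b ≠ b' →
      Disjoint (Finset.univ.filter fun F => PartOf Finset.univ k F ∧ F ∩ Sg = Sg.erase b)
        (Finset.univ.filter fun F => PartOf Finset.univ k F ∧ F ∩ Sg = Sg.erase b') := by
    intro b hb b' hb' hne
    rw [Finset.disjoint_left]
    intro F h1 h2
    simp only [Finset.mem_filter, Finset.mem_univ, true_and] at h1 h2
    exact hne ((Finset.erase_inj Sg hb).mp (h1.2.symm.trans h2.2))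
  rw [hsetW, Set.ncard_coe_finset, hU, Finset.card_union_of_disjoint hdj, hbiU,
    Finset.card_biUnion hdisjU]
  have hsum : ∀ b ∈ Sg,
      ((Finset.univ.filter fun F =>
          PartOf Finset.univ k F ∧ F ∩ Sg = Sg.erase b).card : ℤ)
        = (stirling (n - t) (k - t) : ℤ) - (stirling (n - (t + 1)) (k - (t + 1)) : ℤ) := by
    intro b hb
    have h1 := hper b hb
    rw [N1] at h1
    omega
  push_cast
  rw [Finset.sum_congr rfl hsum, Finset.sum_const, N1, hGsing, nsmul_eq_mul]
  have e1 : n - (t + 1) = n - t - 1 := by omega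
  have e2 : k - (t + 1) = k - t - 1 := by omega
  rw [e1, e2]
  push_cast
  ring
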